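/- Suppose max V − ∫₀¹ V(x) dx < 1. Then there exists J > 0 such that α⁺(j) ≤ 1 for all 0 < j ≤ J; for such j, let H̄_j be the unique H ≥ H_j^{cr} with ∫₀¹ m⁺_H(x) dx = 1, set m_j := m⁺_{H̄_j} and p_j := ∫₀¹ j/m_j(y) dy. Then, as j → 0⁺: H̄_j → 1 + ∫₀¹ V(x) dx, m_j(x) → 1 + ∫₀¹ V(y) dy − V(x) for every x ∈ ℝ, and p_j → 0. -/

import Mathlib

open MeasureTheory Filter

/-- low-current asymptotics when `max V − ∫₀¹ V < 1`. For small
`j > 0` we have `α⁺(j) ≤ 1`; letting `H̄_j ≥ H_j^{cr}` be the level with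
`∫₀¹ m⁺_{H̄_j} = 1`, `m_j := m⁺_{H̄_j}` and `p_j := ∫₀¹ j/m_j`, as `j → 0⁺`
we have `H̄_j → 1 + ∫₀¹ V`, `m_j(x) → 1 + ∫₀¹ V − V(x)`, and `p_j → 0`.
Here `mp j H x` denotes the large branch `m⁺_H(x)` of solutions of
`j²/(2t²) + t = H − V(x)`. -/
theorem stmt_17
    (V : ℝ → ℝ) (hVc : Continuous V) (hVp : Function.Periodic V 1)
    (M : ℝ) (hM : IsGreatest (Set.range V) M)
    (hosc : M - (∫ x in (0:ℝ)..1, V x) < 1)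
    (mp : ℝ → ℝ → ℝ → ℝ)
    (hmp : ∀ j H x, 0 < j → M + 3 / 2 * j ^ ((2:ℝ)/3) ≤ H →
      j ^ ((2:ℝ)/3) ≤ mp j H x ∧
      j ^ 2 / (2 * (mp j H x) ^ 2) + mp j H x = H - V x) :
    ∃ J > 0,
      (∀ j, 0 < j → j ≤ J →
        (∫ x in (0:ℝ)..1, mp j (M + 3 / 2 * j ^ ((2:ℝ)/3)) x) ≤ 1) ∧
      ∀ Hb : ℝ → ℝ,
        (∀ j, 0 < j → j ≤ J → M + 3 / 2 * j ^ ((2:ℝ)/3) ≤ Hb j ∧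
          (∫ x in (0:ℝ)..1, mp j (Hb j) x) = 1) →
        Tendsto Hb (nhdsWithin 0 (Set.Ioi 0))
          (nhds (1 + ∫ x in (0:ℝ)..1, V x)) ∧
        (∀ x, Tendsto (fun j => mp j (Hb j) x) (nhdsWithin 0 (Set.Ioi 0))
          (nhds (1 + (∫ y in (0:ℝ)..1, V y) - V x))) ∧
        Tendsto (fun j => ∫ y in (0:ℝ)..1, j / mp j (Hb j) y)
          (nhdsWithin 0 (Set.Ioi 0)) (nhds 0) := by
  set I := ∫ x in (0:ℝ)..1, V x with hIdef
  -- key pointwise bounds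
  have key : ∀ j H x, 0 < j → M + 3 / 2 * j ^ ((2:ℝ)/3) ≤ H →
      H - V x - j ^ ((2:ℝ)/3) / 2 ≤ mp j H x ∧ mp j H x ≤ H - V x ∧
      j ^ ((2:ℝ)/3) ≤ mp j H x := by
    intro j H x hj hH
    obtain ⟨h1, h2⟩ := hmp j H x hj hH
    have ha0 : 0 < j ^ ((2:ℝ)/3) := Real.rpow_pos_of_pos hj _
    have hm0 : 0 < mp j H x := lt_of_lt_of_le ha0 h1
    have ha3 : (j ^ ((2:ℝ)/3)) ^ 3 = j ^ 2 := by
      rw [← Real.rpow_natCast (j ^ ((2:ℝ)/3)) 3, ← Real.rpow_mul hj.le,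
        ← Real.rpow_natCast j 2]
      norm_num
    have hd : 0 < j ^ 2 / (2 * (mp j H x) ^ 2) := by positivity
    refine ⟨?_, by linarith, h1⟩
    have hle : j ^ 2 / (2 * (mp j H x) ^ 2) ≤ j ^ ((2:ℝ)/3) / 2 := by
      rw [div_le_div_iff₀ (by positivity) (by norm_num : (0:ℝ) < 2)]
      have hsq : (j ^ ((2:ℝ)/3)) ^ 2 ≤ (mp j H x) ^ 2 := by nlinarith [h1, ha0]
      nlinarith [mul_le_mul_of_nonneg_left hsq ha0.le, ha3]
    linarith
  have hIV : ∀ c : ℝ, (∫ x in (0:ℝ)..1, (c - V x)) = c - I := by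
    intro c
    rw [intervalIntegral.integral_sub intervalIntegrable_const
      (hVc.intervalIntegrable 0 1)]
    simp [hIdef]
  have hε0 : 0 < 1 - (M - I) := by linarith
  set J := (2 * (1 - (M - I)) / 3) ^ ((3:ℝ)/2) with hJdef
  have hJ0 : 0 < J := Real.rpow_pos_of_pos (by linarith) _
  have hJ23 : ∀ j : ℝ, 0 < j → j ≤ J → j ^ ((2:ℝ)/3) ≤ 2 * (1 - (M - I)) / 3 := by
    intro j hj hjJ
    calc j ^ ((2:ℝ)/3) ≤ J ^ ((2:ℝ)/3) :=
          Real.rpow_le_rpow hj.le hjJ (by norm_num)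
      _ = 2 * (1 - (M - I)) / 3 := by
          rw [hJdef, ← Real.rpow_mul (by linarith : (0:ℝ) ≤ 2 * (1 - (M - I)) / 3)]
          norm_num
  -- tendsto of power functions
  have htp : ∀ e : ℝ, 0 < e → Tendsto (fun j : ℝ => j ^ e)
      (nhdsWithin 0 (Set.Ioi 0)) (nhds 0) := by
    intro e he
    have h := (Real.continuousAt_rpow_const 0 e (Or.inr he.le)).tendsto
    rw [Real.zero_rpow he.ne'] at h
    exact h.mono_left nhdsWithin_le_nhds
  have hmem : Set.Ioo (0:ℝ) J ∈ nhdsWithin (0:ℝ) (Set.Ioi 0) :=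
    Ioo_mem_nhdsGT_of_mem ⟨le_refl 0, hJ0⟩
  refine ⟨J, hJ0, ?_, ?_⟩
  · -- part 1 : α⁺(j) ≤ 1
    intro j hj hjJ
    by_cases hint : IntervalIntegrable
        (mp j (M + 3 / 2 * j ^ ((2:ℝ)/3))) volume 0 1
    · have hmono := intervalIntegral.integral_mono_on (by norm_num : (0:ℝ) ≤ 1)
        hint ((continuous_const.sub hVc).intervalIntegrable 0 1)
        (fun x _ => (key j _ x hj le_rfl).2.1)
      simp only [Pi.sub_apply] at hmono
      rw [hIV (M + 3 / 2 * j ^ ((2:ℝ)/3))] at hmono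
      have := hJ23 j hj hjJ
      linarith
    · rw [intervalIntegral.integral_undef hint]; norm_num
  · -- part 2
    intro Hb hHb
    have hbd : ∀ j ∈ Set.Ioo (0:ℝ) J,
        1 + I ≤ Hb j ∧ Hb j ≤ 1 + I + j ^ ((2:ℝ)/3) / 2 := by
      rintro j ⟨hj, hjJ⟩
      obtain ⟨hH, heq⟩ := hHb j hj hjJ.le
      have hint : IntervalIntegrable (mp j (Hb j)) volume 0 1 := by
        by_contra h
        rw [intervalIntegral.integral_undef h] at heq
        norm_num at heq
      have hup := intervalIntegral.integral_mono_on (by norm_num : (0:ℝ) ≤ 1)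
        hint ((continuous_const.sub hVc).intervalIntegrable 0 1)
        (fun x _ => (key j (Hb j) x hj hH).2.1)
      have hlo := intervalIntegral.integral_mono_on (by norm_num : (0:ℝ) ≤ 1)
        ((continuous_const.sub hVc).intervalIntegrable 0 1) hint
        (fun x _ => by
          have := (key j (Hb j) x hj hH).1
          show Hb j - j ^ ((2:ℝ)/3) / 2 - V x ≤ mp j (Hb j) x
          linarith)
      simp only [Pi.sub_apply] at hup hlo
      rw [hIV (Hb j), heq] at hup
      rw [hIV (Hb j - j ^ ((2:ℝ)/3) / 2), heq] at hlo
      constructor <;> linarith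
    have hHbT : Tendsto Hb (nhdsWithin 0 (Set.Ioi 0)) (nhds (1 + I)) := by
      refine tendsto_of_tendsto_of_tendsto_of_le_of_le'
        (h := fun j : ℝ => 1 + I + j ^ ((2:ℝ)/3) / 2) tendsto_const_nhds
        ?_ ?_ ?_
      · have : Tendsto (fun j : ℝ => 1 + I + j ^ ((2:ℝ)/3) / 2)
            (nhdsWithin 0 (Set.Ioi 0)) (nhds (1 + I + 0 / 2)) :=
          (((htp (2/3) (by norm_num)).div_const 2).const_add (1 + I))
        simpa using this
      · filter_upwards [hmem] with j hj using (hbd j hj).1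
      · filter_upwards [hmem] with j hj using (hbd j hj).2
    refine ⟨hHbT, ?_, ?_⟩
    · -- pointwise convergence of m_j
      intro x
      refine tendsto_of_tendsto_of_tendsto_of_le_of_le'
        (g := fun j : ℝ => Hb j - V x - j ^ ((2:ℝ)/3) / 2)
        (h := fun j : ℝ => Hb j - V x) ?_ ?_ ?_ ?_
      · have : Tendsto (fun j : ℝ => Hb j - V x - j ^ ((2:ℝ)/3) / 2)
            (nhdsWithin 0 (Set.Ioi 0)) (nhds (1 + I - V x - 0 / 2)) :=
          ((hHbT.sub tendsto_const_nhds).sub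
            ((htp (2/3) (by norm_num)).div_const 2))
        simpa using this
      · simpa using hHbT.sub (tendsto_const_nhds (x := V x))
      · filter_upwards [hmem] with j hj
        exact (key j (Hb j) x hj.1 (hHb j hj.1 hj.2.le).1).1
      · filter_upwards [hmem] with j hj
        exact (key j (Hb j) x hj.1 (hHb j hj.1 hj.2.le).1).2.1
    · -- p_j → 0
      refine squeeze_zero_norm' ?_ (by simpa using (htp (1/3) (by norm_num)))
      filter_upwards [hmem] with j hj
      obtain ⟨hj0, hjJ⟩ := hj
      have hH := (hHb j hj0 hjJ.le).1
      have ha0 : 0 < j ^ ((2:ℝ)/3) := Real.rpow_pos_of_pos hj0 _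
      have hb : ∀ x ∈ Set.uIoc (0:ℝ) 1, ‖j / mp j (Hb j) x‖ ≤ j ^ ((1:ℝ)/3) := by
        intro x _
        have hm := (key j (Hb j) x hj0 hH).2.2
        have hm0 : 0 < mp j (Hb j) x := lt_of_lt_of_le ha0 hm
        rw [Real.norm_eq_abs, abs_of_nonneg (by positivity)]
        have h13 : j ^ ((1:ℝ)/3) = j / j ^ ((2:ℝ)/3) := by
          rw [show (1:ℝ)/3 = 1 - 2/3 by norm_num, Real.rpow_sub hj0,
            Real.rpow_one]
        rw [h13]
        gcongr
      have := intervalIntegral.norm_integral_le_of_norm_le_const hb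
      simpa using this
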